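/- For a nonnegative even integrable kernel J with ∫|x|J(x)dx < ∞ and any bounded measurable U : ℝ → [0,1] that is nondecreasing with U(−∞)=0, the identity ∫_{−∞}^{−R} [(J*U)(x) − U(x)] dx = −∫_ℝ y J(y) ∫₀¹ [U(−R − s y) − 0] ds dy holds whenever U is C¹ with integrable derivative, and in particular ∫_{−∞}^{−R} [(J*U)(x) − U(x)] dx ≤ ∫_ℝ |y| J(y) dy. -/

import Mathlib

open MeasureTheory Filter Set Topology intervalIntegral

noncomputable def tailN (U : ℝ → ℝ) (x y : ℝ) : ℝ := ∫ s in (0:ℝ)..1, deriv U (x - s * y)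

/-- integral identity for `∫_{−∞}^{−R} (J*U − U)` and the first-moment bound. -/
theorem tail_convolution_identity
    (J U : ℝ → ℝ) (R : ℝ)
    (hJpos : ∀ x, 0 ≤ J x)
    (hJeven : ∀ x, J x = J (-x))
    (hJint : Integrable J)
    (hJone : ∫ x, J x = 1)
    (hJmom : Integrable (fun y => |y| * J y))
    (hU : ContDiff ℝ 1 U)
    (hUmono : Monotone U)
    (hUrange : ∀ x, U x ∈ Set.Icc (0 : ℝ) 1)
    (hUlim : Tendsto U atBot (nhds 0))
    (hU'int : Integrable (deriv U))
    (hR : 0 < R) :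
    (∫ x in Set.Iic (-R), ((∫ y : ℝ, J (x - y) * U y) - U x)) =
        -∫ y : ℝ, y * J y * ∫ s in (0 : ℝ)..1, (U (-R - s * y) - 0) ∧
      (∫ x in Set.Iic (-R), ((∫ y : ℝ, J (x - y) * U y) - U x)) ≤
        ∫ y : ℝ, |y| * J y := by
  have hUd := hU.differentiable one_ne_zero
  have hUc := hU.continuous
  have hU'c : Continuous (deriv U) := hU.continuous_deriv le_rfl
  -- deriv U nonneg
  have hU'nn : ∀ x, 0 ≤ deriv U x := by
    intro x
    have h := (hUd x).hasDerivAt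
    rw [hasDerivAt_iff_tendsto_slope] at h
    refine ge_of_tendsto h ?_
    filter_upwards [self_mem_nhdsWithin] with y hy
    rcases lt_or_gt_of_ne (Ne.symm hy) with h1 | h1
    · rw [slope_def_field]
      exact div_nonneg (by simp [hUmono h1.le, sub_nonneg]) (by linarith)
    · rw [slope_def_field]
      exact div_nonneg_iff.2 (Or.inr ⟨by simp [hUmono h1.le, sub_nonpos], by linarith⟩)
  -- FTC on half line
  have ftc : ∀ a c : ℝ, ∫ x in Iic a, deriv U (x - c) = U (a - c) := by
    intro a c
    have key : ∫ x in Iic a, deriv U (x - c) = U (a - c) - 0 := by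
      apply integral_Iic_of_hasDerivAt_of_tendsto
      · exact (hUc.comp (continuous_id.sub continuous_const)).continuousWithinAt
      · intro x _
        exact (hUd (x - c)).hasDerivAt.comp_sub_const x c
      · exact (hU'int.comp_sub_right c).integrableOn
      · exact hUlim.comp (tendsto_atBot_add_const_right atBot (-c) tendsto_id)
    simpa using key
  -- segment representation
  have segment : ∀ x y : ℝ, U (x - y) - U x = -(y * tailN U x y) := by
    intro x y
    have h1 : ∀ s ∈ uIcc (0:ℝ) 1,
        HasDerivAt (fun s => U (x - s * y)) (deriv U (x - s * y) * (-y)) s := fun s _ =>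
      (hUd (x - s * y)).hasDerivAt.comp s ((hasDerivAt_mul_const y).const_sub x)
    have h2 : IntervalIntegrable (fun s => deriv U (x - s * y) * (-y)) volume 0 1 :=
      ((hU'c.comp (continuous_const.sub (continuous_id.mul continuous_const))).mul
        continuous_const).intervalIntegrable 0 1
    have := intervalIntegral.integral_eq_sub_of_hasDerivAt h1 h2
    simp only [one_mul, zero_mul, sub_zero] at this
    rw [tailN, ← this, intervalIntegral.integral_mul_const]
    ring
  -- pointwise identity in x
  have key1 : ∀ x : ℝ, (∫ y : ℝ, J (x - y) * U y) - U x = -∫ y : ℝ, y * J y * tailN U x y := by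
    intro x
    have step1 : (∫ y : ℝ, J (x - y) * U y) = ∫ y : ℝ, J y * U (x - y) := by
      have := integral_sub_left_eq_self (fun z => J (x - z) * U z) volume x
      simp only [sub_sub_cancel] at this
      exact this.symm
    have hJU : Integrable (fun y => J y * U (x - y)) := by
      refine hJint.mono (hJint.aestronglyMeasurable.mul
        ((hUc.comp (continuous_const.sub continuous_id)).aestronglyMeasurable)) ?_
      filter_upwards with y
      rw [norm_mul]
      have h1 := hUrange (x - y)
      have h2 : |U (x - y)| ≤ 1 := abs_le.2 ⟨by linarith [h1.1], h1.2⟩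
      calc ‖J y‖ * ‖U (x-y)‖ ≤ ‖J y‖ * 1 := mul_le_mul_of_nonneg_left h2 (norm_nonneg _)
        _ = ‖J y‖ := mul_one _
    have step2 : (∫ y : ℝ, J y * U (x - y)) - U x = ∫ y : ℝ, J y * (U (x - y) - U x) :=
      calc (∫ y : ℝ, J y * U (x - y)) - U x
          = (∫ y : ℝ, J y * U (x - y)) - ∫ y : ℝ, J y * U x := by
            rw [MeasureTheory.integral_mul_const, hJone, one_mul]
        _ = ∫ y : ℝ, (J y * U (x - y) - J y * U x) :=
            (integral_sub hJU (hJint.mul_const (U x))).symm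
        _ = ∫ y : ℝ, J y * (U (x - y) - U x) := by simp [mul_sub]
    rw [step1, step2, ← MeasureTheory.integral_neg]
    congr 1
    ext y
    rw [segment x y]
    ring
  -- interval integral to set integral over Ioc
  have hIoc : ∀ (f : ℝ → ℝ), (∫ s in (0:ℝ)..1, f s) = ∫ s in Ioc (0:ℝ) 1, f s :=
    fun f => intervalIntegral.integral_of_le zero_le_one
  -- inner product integrability in (x,s), for each y, and the swap
  have hprod : ∀ y : ℝ, Integrable (Function.uncurry fun x s => deriv U (x - s * y))
      ((volume.restrict (Iic (-R))).prod (volume.restrict (Ioc (0:ℝ) 1))) := by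
    intro y
    have hc : Continuous fun p : ℝ × ℝ => deriv U (p.1 - p.2 * y) :=
      hU'c.comp (continuous_fst.sub (continuous_snd.mul continuous_const))
    refine (integrable_prod_iff' hc.aestronglyMeasurable).2 ⟨?_, ?_⟩
    · exact Eventually.of_forall fun s => (hU'int.comp_sub_right (s * y)).integrableOn
    · have heq : (fun s => ∫ x in Iic (-R), ‖deriv U (x - s * y)‖) =
          fun s => U (-R - s * y) := by
        funext s
        rw [show (fun x => ‖deriv U (x - s * y)‖) = fun x => deriv U (x - s * y) from
          funext fun x => Real.norm_of_nonneg (hU'nn _)]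
        exact ftc (-R) (s * y)
      rw [heq]
      exact (hUc.comp (continuous_const.sub (continuous_id.mul continuous_const))).integrableOn_Ioc
  have hNint : ∀ y : ℝ, IntegrableOn (fun x => tailN U x y) (Iic (-R)) := by
    intro y
    refine ((hprod y).integral_prod_left).congr (Eventually.of_forall fun x => ?_)
    exact (hIoc _).symm
  have hswap1 : ∀ y : ℝ,
      (∫ x in Iic (-R), tailN U x y) = ∫ s in Ioc (0:ℝ) 1, U (-R - s * y) := by
    intro y
    calc (∫ x in Iic (-R), tailN U x y)
        = ∫ x in Iic (-R), ∫ s in Ioc (0:ℝ) 1, deriv U (x - s * y) :=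
          integral_congr_ae (Eventually.of_forall fun x => hIoc _)
      _ = ∫ s in Ioc (0:ℝ) 1, ∫ x in Iic (-R), deriv U (x - s * y) :=
          integral_integral_swap (hprod y)
      _ = ∫ s in Ioc (0:ℝ) 1, U (-R - s * y) :=
          integral_congr_ae (Eventually.of_forall fun s => ftc (-R) (s * y))
  -- inner integral bounds
  have hinner : ∀ y : ℝ, (∫ s in Ioc (0:ℝ) 1, U (-R - s * y)) ∈ Icc (0:ℝ) 1 := by
    intro y
    constructor
    · exact setIntegral_nonneg measurableSet_Ioc fun s _ => (hUrange _).1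
    · have : (∫ s in Ioc (0:ℝ) 1, U (-R - s * y)) ≤ ∫ _ in Ioc (0:ℝ) 1, (1:ℝ) :=
        setIntegral_mono_on
          ((hUc.comp (continuous_const.sub (continuous_id.mul continuous_const))).integrableOn_Ioc)
          (integrableOn_const (by simp)) measurableSet_Ioc fun s _ => (hUrange _).2
      simpa using this
  -- strong measurability of (x,y) ↦ tailN U x y
  have hNsm : StronglyMeasurable (fun p : ℝ × ℝ => tailN U p.1 p.2) := by
    have hc : Continuous fun q : (ℝ × ℝ) × ℝ => deriv U (q.1.1 - q.2 * q.1.2) :=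
      hU'c.comp ((continuous_fst.comp continuous_fst).sub
        (continuous_snd.mul (continuous_snd.comp continuous_fst)))
    have h := hc.stronglyMeasurable.integral_prod_right' (ν := volume.restrict (Ioc (0:ℝ) 1))
    have heq : (fun p : ℝ × ℝ => tailN U p.1 p.2) =
        fun p : ℝ × ℝ => ∫ s in Ioc (0:ℝ) 1, deriv U (p.1 - s * p.2) :=
      funext fun p => hIoc _
    rw [heq]
    exact h
  have hNnn : ∀ x y : ℝ, 0 ≤ tailN U x y := fun x y =>
    intervalIntegral.integral_nonneg zero_le_one fun s _ => hU'nn _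
  -- a.e.-measurability of y ↦ ∫_{Ioc} U(-R - s y) ds
  have hIsm : StronglyMeasurable (fun y : ℝ => ∫ s in Ioc (0:ℝ) 1, U (-R - s * y)) := by
    have hc : Continuous fun q : ℝ × ℝ => U (-R - q.2 * q.1) :=
      hUc.comp (continuous_const.sub (continuous_snd.mul continuous_fst))
    exact hc.stronglyMeasurable.integral_prod_right' (ν := volume.restrict (Ioc (0:ℝ) 1))
  -- outer product integrability in (x,y)
  have hF : Integrable (Function.uncurry fun x y : ℝ => y * J y * tailN U x y)
      ((volume.restrict (Iic (-R))).prod volume) := by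
    have haesm : AEStronglyMeasurable (Function.uncurry fun x y : ℝ => y * J y * tailN U x y)
        ((volume.restrict (Iic (-R))).prod volume) := by
      have h1 : AEStronglyMeasurable (fun y : ℝ => y * J y) volume :=
        aestronglyMeasurable_id.mul hJint.aestronglyMeasurable
      exact h1.comp_snd.mul hNsm.aestronglyMeasurable
    refine (integrable_prod_iff' haesm).2 ⟨?_, ?_⟩
    · exact Eventually.of_forall fun y => (hNint y).const_mul (y * J y)
    · have heq2 : (fun y => ∫ x in Iic (-R),
          ‖Function.uncurry (fun x y : ℝ => y * J y * tailN U x y) (x, y)‖) =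
          fun y => |y| * J y * ∫ s in Ioc (0:ℝ) 1, U (-R - s * y) := by
        funext y
        have : (fun x => ‖Function.uncurry (fun x y : ℝ => y * J y * tailN U x y) (x, y)‖) =
            fun x => (|y| * J y) * tailN U x y := by
          funext x
          simp only [Function.uncurry, Real.norm_eq_abs, abs_mul, abs_of_nonneg (hJpos y),
            abs_of_nonneg (hNnn x y)]
        rw [this, MeasureTheory.integral_const_mul, hswap1 y]
      rw [heq2]
      refine hJmom.mono ((continuous_abs.aestronglyMeasurable.mul
        hJint.aestronglyMeasurable).mul hIsm.aestronglyMeasurable) ?_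
      filter_upwards with y
      rw [norm_mul]
      have hI := hinner y
      have : ‖∫ s in Ioc (0:ℝ) 1, U (-R - s * y)‖ ≤ 1 :=
        abs_le.2 ⟨by linarith [hI.1], hI.2⟩
      calc ‖|y| * J y‖ * ‖∫ s in Ioc (0:ℝ) 1, U (-R - s * y)‖
          ≤ ‖|y| * J y‖ * 1 := mul_le_mul_of_nonneg_left this (norm_nonneg _)
        _ = ‖|y| * J y‖ := mul_one _
  -- integrability of the y-marginal
  have gInt : Integrable (fun y : ℝ => y * J y * ∫ s in Ioc (0:ℝ) 1, U (-R - s * y)) := by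
    refine (hF.swap.integral_prod_left).congr (Eventually.of_forall fun y => ?_)
    simp only [Function.comp, Function.uncurry, Prod.swap]
    rw [MeasureTheory.integral_const_mul, hswap1 y]
  -- main identity
  have main : (∫ x in Iic (-R), ((∫ y : ℝ, J (x - y) * U y) - U x)) =
      -∫ y : ℝ, y * J y * ∫ s in Ioc (0:ℝ) 1, U (-R - s * y) := by
    calc (∫ x in Iic (-R), ((∫ y : ℝ, J (x - y) * U y) - U x))
        = ∫ x in Iic (-R), (-∫ y : ℝ, y * J y * tailN U x y) :=
          integral_congr_ae (Eventually.of_forall fun x => key1 x)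
      _ = -∫ x in Iic (-R), ∫ y : ℝ, y * J y * tailN U x y := MeasureTheory.integral_neg _
      _ = -∫ y : ℝ, ∫ x in Iic (-R), y * J y * tailN U x y := by
          rw [integral_integral_swap hF]
      _ = -∫ y : ℝ, y * J y * ∫ s in Ioc (0:ℝ) 1, U (-R - s * y) := by
          congr 1
          refine integral_congr_ae (Eventually.of_forall fun y => ?_)
          simp only [MeasureTheory.integral_const_mul, hswap1 y]
  constructor
  · rw [main]
    congr 1
    refine integral_congr_ae (Eventually.of_forall fun y => ?_)
    simp only [sub_zero]
    rw [hIoc]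
  · rw [main, ← MeasureTheory.integral_neg]
    refine integral_mono gInt.neg hJmom fun y => ?_
    have hI := hinner y
    have habs : |y * J y * ∫ s in Ioc (0:ℝ) 1, U (-R - s * y)| ≤ |y| * J y := by
      rw [abs_mul, abs_mul, abs_of_nonneg (hJpos y)]
      have h1 : |∫ s in Ioc (0:ℝ) 1, U (-R - s * y)| ≤ 1 := abs_le.2 ⟨by linarith [hI.1], hI.2⟩
      calc |y| * J y * |∫ s in Ioc (0:ℝ) 1, U (-R - s * y)| ≤ |y| * J y * 1 :=
            mul_le_mul_of_nonneg_left h1 (mul_nonneg (abs_nonneg y) (hJpos y))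
        _ = |y| * J y := mul_one _
    calc -(y * J y * ∫ s in Ioc (0:ℝ) 1, U (-R - s * y))
        ≤ |y * J y * ∫ s in Ioc (0:ℝ) 1, U (-R - s * y)| := neg_le_abs _
      _ ≤ |y| * J y := habs
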